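/- Fix a real m > 0 and let p : ℤ → ℝ be nonnegative and summable with Σ_{k∈ℤ} p_k = 1. Define p′_k = p_k(1 − p_k^m) + (1/2)p_{k+1}^{m+1} + (1/2)p_{k−1}^{m+1}, and set F_k = Σ_{j ≤ k} p_j and F′_k = Σ_{j ≤ k} p′_j. Then p′ is nonnegative and summable, and for every k ∈ ℤ, F′_k = F_k + (1/2)[(F_{k+1} − F_k)^{m+1} − (F_k − F_{k−1})^{m+1}]. -/

import Mathlib

lemma trunc_summable (f : ℤ → ℝ) (hf : Summable f) (c : ℤ) :
    Summable (fun j : ℤ => if j ≤ c then f j else 0) := by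
  have h : (fun j : ℤ => if j ≤ c then f j else 0) = Set.indicator {j : ℤ | j ≤ c} f := by
    funext j; simp [Set.indicator_apply]
  rw [h]; exact hf.indicator _

lemma trunc_step (f : ℤ → ℝ) (hf : Summable f) (k : ℤ) :
    (∑' j : ℤ, if j ≤ k + 1 then f j else 0)
      = (∑' j : ℤ, if j ≤ k then f j else 0) + f (k + 1) := by
  have h1 := trunc_summable f hf k
  have h2 : Summable (fun j : ℤ => if j = k + 1 then f j else 0) := by
    have h : (fun j : ℤ => if j = k + 1 then f j else 0)
        = Set.indicator {j : ℤ | j = k + 1} f := by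
      funext j; simp [Set.indicator_apply]
    rw [h]; exact hf.indicator _
  have key : ∀ j : ℤ, (if j ≤ k + 1 then f j else 0)
      = (if j ≤ k then f j else 0) + (if j = k + 1 then f j else 0) := by
    intro j
    by_cases hj : j ≤ k
    · rw [if_pos hj, if_pos (by omega), if_neg (by omega)]; ring
    · by_cases hj' : j = k + 1
      · rw [if_neg hj, if_pos hj', if_pos (by omega)]; ring
      · rw [if_neg hj, if_neg hj', if_neg (by omega)]; ring
  have h3 : (∑' j : ℤ, if j = k + 1 then f j else 0) = f (k + 1) := by
    rw [tsum_eq_single (k + 1) (fun b hb => if_neg hb)]; simp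
  rw [tsum_congr key, Summable.tsum_add h1 h2, h3]

theorem statement7 (m : ℝ) (hm : 0 < m)
    (p : ℤ → ℝ) (hnn : ∀ k : ℤ, 0 ≤ p k) (hsum : HasSum p 1)
    (p' : ℤ → ℝ)
    (hp' : ∀ k : ℤ, p' k =
      p k * (1 - p k ^ m) + (1 / 2) * p (k + 1) ^ (m + 1) + (1 / 2) * p (k - 1) ^ (m + 1))
    (F F' : ℤ → ℝ)
    (hF : ∀ k : ℤ, F k = ∑' j : ℤ, if j ≤ k then p j else 0)
    (hF' : ∀ k : ℤ, F' k = ∑' j : ℤ, if j ≤ k then p' j else 0) :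
    (∀ k : ℤ, 0 ≤ p' k) ∧ Summable p' ∧
      ∀ k : ℤ, F' k = F k + (1 / 2) * ((F (k + 1) - F k) ^ (m + 1) - (F k - F (k - 1)) ^ (m + 1)) := by
  set q : ℤ → ℝ := fun j => p j ^ (m + 1) with hq
  have ple1 : ∀ k : ℤ, p k ≤ 1 := fun k => le_hasSum hsum k (fun j _ => hnn j)
  have hqnn : ∀ j : ℤ, 0 ≤ q j := fun j => Real.rpow_nonneg (hnn j) _
  have hqle : ∀ j : ℤ, q j ≤ p j := by
    intro j
    by_cases h : p j = 0
    · simp [hq, h, Real.zero_rpow (show m + 1 ≠ 0 by linarith)]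
    · have hpos : 0 < p j := lt_of_le_of_ne (hnn j) (Ne.symm h)
      calc q j = p j ^ (m + 1) := rfl
        _ ≤ p j ^ (1 : ℝ) :=
          Real.rpow_le_rpow_of_exponent_ge hpos (ple1 j) (by linarith)
        _ = p j := Real.rpow_one _
  have hqsum : Summable q := Summable.of_nonneg_of_le hqnn hqle hsum.summable
  have hmul : ∀ j : ℤ, p j * p j ^ m = q j := by
    intro j
    by_cases h : p j = 0
    · simp [hq, h, Real.zero_rpow (show m + 1 ≠ 0 by linarith)]
    · show p j * p j ^ m = p j ^ (m + 1)
      rw [Real.rpow_add_one h]; ring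
  have hp'eq : ∀ j : ℤ, p' j = p j - q j + (1 / 2) * q (j + 1) + (1 / 2) * q (j - 1) := by
    intro j
    have := hmul j
    rw [hp' j]
    show p j * (1 - p j ^ m) + (1 / 2) * q (j + 1) + (1 / 2) * q (j - 1) = _
    nlinarith [this]
  -- nonnegativity
  have hp'nn : ∀ k : ℤ, 0 ≤ p' k := by
    intro k
    rw [hp' k]
    have h1 : p k ^ m ≤ 1 := Real.rpow_le_one (hnn k) (ple1 k) hm.le
    have h2 : 0 ≤ p k * (1 - p k ^ m) := mul_nonneg (hnn k) (by linarith)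
    have h3 : 0 ≤ (1 / 2 : ℝ) * p (k + 1) ^ (m + 1) :=
      mul_nonneg (by norm_num) (Real.rpow_nonneg (hnn _) _)
    have h4 : 0 ≤ (1 / 2 : ℝ) * p (k - 1) ^ (m + 1) :=
      mul_nonneg (by norm_num) (Real.rpow_nonneg (hnn _) _)
    linarith
  -- summability
  have hq1 : Summable (fun j : ℤ => q (j + 1)) := by
    have := (Equiv.addRight (1 : ℤ)).summable_iff.mpr hqsum
    exact this
  have hq2 : Summable (fun j : ℤ => q (j - 1)) := by
    have := (Equiv.subRight (1 : ℤ)).summable_iff.mpr hqsum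
    exact this
  have hp'sum : Summable p' := by
    have : Summable (fun j : ℤ =>
        p j - q j + (1 / 2) * q (j + 1) + (1 / 2) * q (j - 1)) :=
      (((hsum.summable.sub hqsum).add (hq1.mul_left _)).add (hq2.mul_left _))
    exact this.congr (fun j => (hp'eq j).symm)
  refine ⟨hp'nn, hp'sum, ?_⟩
  intro k
  -- values of the CDF increments
  have hFk1 := trunc_step p hsum.summable k
  have hFk0 := trunc_step p hsum.summable (k - 1)
  rw [show k - 1 + 1 = k by ring] at hFk0
  have hFstep1 : F (k + 1) - F k = p (k + 1) := by
    rw [hF (k + 1), hF k, hFk1]; ring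
  have hFstep0 : F k - F (k - 1) = p k := by
    rw [hF k, hF (k - 1), hFk0]; ring
  -- truncated sums of q
  have hQ1 := trunc_step q hqsum k
  have hQ0 := trunc_step q hqsum (k - 1)
  rw [show k - 1 + 1 = k by ring] at hQ0
  -- shift identities
  have hshift1 : (∑' j : ℤ, if j ≤ k then q (j + 1) else 0)
      = ∑' i : ℤ, if i ≤ k + 1 then q i else 0 := by
    have := (Equiv.addRight (1 : ℤ)).tsum_eq (fun i : ℤ => if i ≤ k + 1 then q i else 0)
    rw [← this]
    apply tsum_congr
    intro j
    simp only [Equiv.coe_addRight]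
    congr 1
    simp [Int.add_le_add_iff_right]
  have hshift2 : (∑' j : ℤ, if j ≤ k then q (j - 1) else 0)
      = ∑' i : ℤ, if i ≤ k - 1 then q i else 0 := by
    have := (Equiv.subRight (1 : ℤ)).tsum_eq (fun i : ℤ => if i ≤ k - 1 then q i else 0)
    rw [← this]
    apply tsum_congr
    intro j
    simp only [Equiv.subRight_apply]
    congr 1
    simp only [eq_iff_iff]
    omega
  -- decompose F' k
  have hsummands1 := trunc_summable p hsum.summable k
  have hsummands2 := trunc_summable q hqsum k
  have hsummands3 : Summable (fun j : ℤ => if j ≤ k then q (j + 1) else 0) :=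
    trunc_summable _ hq1 k
  have hsummands4 : Summable (fun j : ℤ => if j ≤ k then q (j - 1) else 0) :=
    trunc_summable _ hq2 k
  have hdecomp : (∑' j : ℤ, if j ≤ k then p' j else 0)
      = (∑' j : ℤ, if j ≤ k then p j else 0) - (∑' j : ℤ, if j ≤ k then q j else 0)
        + (1 / 2) * (∑' j : ℤ, if j ≤ k then q (j + 1) else 0)
        + (1 / 2) * (∑' j : ℤ, if j ≤ k then q (j - 1) else 0) := by
    rw [← tsum_mul_left, ← tsum_mul_left, ← Summable.tsum_sub hsummands1 hsummands2,
        ← Summable.tsum_add (hsummands1.sub hsummands2) (hsummands3.mul_left _),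
        ← Summable.tsum_add ((hsummands1.sub hsummands2).add (hsummands3.mul_left _))
          ((hsummands4).mul_left _)]
    apply tsum_congr
    intro j
    by_cases hj : j ≤ k
    · simp only [if_pos hj, hp'eq j]
    · simp [if_neg hj]
  rw [hF' k, hdecomp, hshift1, hshift2, hQ1, hFstep1, hFstep0, hF k]
  have : (∑' j : ℤ, if j ≤ k then q j else 0)
      = (∑' j : ℤ, if j ≤ k - 1 then q j else 0) + q k := hQ0
  show _ = _ + (1 / 2) * (q (k + 1) - q k)
  linarith [this]
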